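/- The topological complexity of the finite model 𝕊¹_3 of the circle with 6 points equals 3: TC(𝕊¹_3) = 3. In particular, 𝕊¹_3 × 𝕊¹_3 can be covered by three open sets each admitting a motion planner, but not by two. -/

import Mathlib

open Set

/-- `Q ⊆ X × X` admits a motion planner: a continuous map `s` from `Q` to the path
space `P(X) = C(I, X)` (with the compact-open topology) that is a section of the
endpoint map `π : C(I, X) → X × X`, `γ ↦ (γ 0, γ 1)`. -/
def AdmitsMotionPlanner {X : Type*} [TopologicalSpace X] (Q : Set (X × X)) : Prop :=
  ∃ s : C(Q, C(unitInterval, X)), ∀ q : Q, ((s q) 0, (s q) 1) = (q : X × X)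

/-- `X × X` is covered by `k` open sets, each admitting a motion planner. -/
def TCCover (X : Type*) [TopologicalSpace X] (k : ℕ) : Prop :=
  ∃ Q : Fin k → Set (X × X),
    (∀ i, IsOpen (Q i)) ∧ (⋃ i, Q i) = Set.univ ∧ ∀ i, AdmitsMotionPlanner (Q i)

/-- The (unreduced) topological complexity of `X`: the least `k` such that `X × X`
can be covered by `k` open sets, each admitting a motion planner. -/
noncomputable def topologicalComplexity (X : Type*) [TopologicalSpace X] : ℕ :=
  sInf {k | TCCover X k}
/-- The underlying set of the finite model `𝕊¹_n` of the circle (`2n` points):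
`Sum.inl i` is `x_i` and `Sum.inr i` is `y_i`. -/
def SCirc (n : ℕ) : Type := Fin n ⊕ Fin n

namespace SCirc

/-- The minimal point `x_i` of `𝕊¹_n`. -/
def x {n : ℕ} (i : Fin n) : SCirc n := Sum.inl i

/-- The maximal point `y_i` of `𝕊¹_n`. -/
def y {n : ℕ} (i : Fin n) : SCirc n := Sum.inr i

/-- The partial order on `𝕊¹_n` generated by `x_i < y_i` and `x_{(i-1) mod n} < y_i`. -/
def le {n : ℕ} : SCirc n → SCirc n → Prop
  | Sum.inl i, Sum.inl j => i = j
  | Sum.inr i, Sum.inr j => i = j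
  | Sum.inl i, Sum.inr j => i = j ∨ (i : ℕ) = ((j : ℕ) + n - 1) % n
  | Sum.inr _, Sum.inl _ => False

/-- The Alexandrov topology on `𝕊¹_n`: open sets are down-sets.  The minimal open
neighbourhoods are `x_i^↓ = {x_i}` and `y_i^↓ = {y_i, x_i, x_{(i-1) mod n}}`. -/
instance (n : ℕ) : TopologicalSpace (SCirc n) where
  IsOpen U := ∀ a ∈ U, ∀ b, SCirc.le b a → b ∈ U
  isOpen_univ := fun _ _ _ _ => trivial
  isOpen_inter := fun _ _ hU hV a ha b hba => ⟨hU a ha.1 b hba, hV a ha.2 b hba⟩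
  isOpen_sUnion := fun S hS a ha b hba => by
    obtain ⟨U, hUS, haU⟩ := ha
    exact ⟨U, hUS, hS U hUS a haU b hba⟩

end SCirc

/-! ### Auxiliary material -/

namespace SCirc

variable {n : ℕ}

instance : DecidableEq (SCirc n) := inferInstanceAs (DecidableEq (Fin n ⊕ Fin n))
instance : Fintype (SCirc n) := inferInstanceAs (Fintype (Fin n ⊕ Fin n))
instance : Finite (SCirc n) := inferInstanceAs (Finite (Fin n ⊕ Fin n))

instance decEqInl (a : SCirc n) (i : Fin n) : Decidable (a = Sum.inl i) :=
  (inferInstance : DecidableEq (SCirc n)) a (Sum.inl i)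
instance decEqInr (a : SCirc n) (i : Fin n) : Decidable (a = Sum.inr i) :=
  (inferInstance : DecidableEq (SCirc n)) a (Sum.inr i)

instance decLe : ∀ a b : SCirc n, Decidable (SCirc.le a b)
  | Sum.inl i, Sum.inl j => inferInstanceAs (Decidable (i = j))
  | Sum.inr i, Sum.inr j => inferInstanceAs (Decidable (i = j))
  | Sum.inl i, Sum.inr j =>
      inferInstanceAs (Decidable (i = j ∨ (i : ℕ) = ((j : ℕ) + n - 1) % n))
  | Sum.inr _, Sum.inl _ => inferInstanceAs (Decidable False)

instance decLeInr (a : SCirc n) (i : Fin n) : Decidable (SCirc.le a (Sum.inr i)) :=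
  decLe a (Sum.inr i)
instance decLeInl (a : SCirc n) (i : Fin n) : Decidable (SCirc.le (Sum.inl i) a) :=
  decLe (Sum.inl i) a

lemma isOpen_def {U : Set (SCirc n)} :
    IsOpen U ↔ ∀ a ∈ U, ∀ b, SCirc.le b a → b ∈ U := Iff.rfl

lemma le_refl' (a : SCirc n) : SCirc.le a a := by
  cases a <;> simp [SCirc.le]

lemma le_trans' {a b c : SCirc n} (hab : SCirc.le a b) (hbc : SCirc.le b c) :
    SCirc.le a c := by
  cases a <;> cases b <;> cases c <;> simp_all [SCirc.le]

lemma isOpen_down (a : SCirc n) : IsOpen {b | SCirc.le b a} := by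
  rw [isOpen_def]
  exact fun c hc b hbc => le_trans' hbc hc

lemma specializes_iff_le {a b : SCirc n} : a ⤳ b ↔ SCirc.le a b := by
  rw [specializes_iff_forall_open]
  constructor
  · intro h
    exact h {c | SCirc.le c b} (isOpen_down b) (le_refl' b)
  · intro h U hU hb
    exact (isOpen_def.mp hU) b hb a h

lemma prod_open_down {U : Set (SCirc n × SCirc n)} (hU : IsOpen U)
    {p q : SCirc n × SCirc n} (hp : p ∈ U)
    (h1 : SCirc.le q.1 p.1) (h2 : SCirc.le q.2 p.2) : q ∈ U := by
  have hs : q ⤳ p := by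
    rw [← Prod.mk.eta (p := q), ← Prod.mk.eta (p := p)]
    exact (specializes_iff_le.mpr h1).prod (specializes_iff_le.mpr h2)
  exact specializes_iff_forall_open.mp hs U hU hp

/-- A map which is monotone on an open set containing the range of a continuous
map yields a continuous composition. -/
lemma continuous_comp_of_monoOn {α : Type*} [TopologicalSpace α]
    (e : α → SCirc n) (he : Continuous e) (S : Set (SCirc n)) (hS : IsOpen S)
    (h : SCirc n → SCirc n) (hrange : ∀ a, e a ∈ S)
    (hmono : ∀ a b, a ∈ S → b ∈ S → SCirc.le a b → SCirc.le (h a) (h b)) :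
    Continuous fun a => h (e a) := by
  rw [continuous_def]
  intro U hU
  have hkey : (fun a => h (e a)) ⁻¹' U = e ⁻¹' {z | z ∈ S ∧ h z ∈ U} := by
    ext a
    simp only [mem_preimage, mem_setOf_eq]
    exact ⟨fun hz => ⟨hrange a, hz⟩, fun hz => hz.2⟩
  rw [hkey]
  apply he.isOpen_preimage
  rw [isOpen_def]
  rintro z ⟨hzS, hzU⟩ b hbz
  exact ⟨isOpen_def.mp hS z hzS b hbz, isOpen_def.mp hU (h z) hzU (h b) (hmono b z (isOpen_def.mp hS z hzS b hbz) hzS hbz)⟩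

/-! ### Step-path families -/

/-- A continuous family of paths realizing a pointwise `le` step. -/
lemma upFam {α : Type*} [TopologicalSpace α] {f g : α → SCirc n}
    (hf : Continuous f) (hg : Continuous g) (hle : ∀ a, SCirc.le (f a) (g a)) :
    ∃ γ : ∀ a, Path (f a) (g a), Continuous ↿γ := by
  have hF : Continuous fun p : α × unitInterval =>
      if ((p.2 : ℝ) < 1) then f p.1 else g p.1 := by
    rw [continuous_def]
    intro U hU
    have hkey : (fun p : α × unitInterval =>
        if ((p.2 : ℝ) < 1) then f p.1 else g p.1) ⁻¹' U =
        ((f ∘ Prod.fst) ⁻¹' U ∩ {p : α × unitInterval | ((p.2 : ℝ) < 1)}) ∪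
          (g ∘ Prod.fst) ⁻¹' U := by
      ext ⟨a, t⟩
      by_cases ht : ((t : ℝ) < 1)
      · simp only [mem_preimage, mem_union, mem_inter_iff, mem_setOf_eq,
          Function.comp_apply, if_pos ht]
        constructor
        · intro h'; exact Or.inl ⟨h', ht⟩
        · rintro (⟨h', _⟩ | h')
          · exact h'
          · exact isOpen_def.mp hU (g a) h' (f a) (hle a)
      · simp only [mem_preimage, mem_union, mem_inter_iff, mem_setOf_eq,
          Function.comp_apply, if_neg ht]
        tauto
    rw [hkey]
    apply IsOpen.union
    · exact ((hf.comp continuous_fst).isOpen_preimage U hU).inter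
        (isOpen_Iio.preimage (continuous_subtype_val.comp continuous_snd))
    · exact (hg.comp continuous_fst).isOpen_preimage U hU
  refine ⟨fun a =>
    { toFun := fun t => if ((t : ℝ) < 1) then f a else g a
      continuous_toFun := hF.comp (Continuous.prodMk_right a)
      source' := by norm_num
      target' := by norm_num }, ?_⟩
  exact hF

lemma downFam {α : Type*} [TopologicalSpace α] {f g : α → SCirc n}
    (hf : Continuous f) (hg : Continuous g) (hle : ∀ a, SCirc.le (g a) (f a)) :
    ∃ γ : ∀ a, Path (f a) (g a), Continuous ↿γ := by
  obtain ⟨δ, hδ⟩ := upFam hg hf hle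
  exact ⟨fun a => (δ a).symm, Path.symm_continuous_family δ hδ⟩

/-! ### The key rigidity argument -/

lemma fin_aux1 : ∀ i : Fin 3, ((i + 2 : Fin 3) : ℕ) = ((i : ℕ) + 3 - 1) % 3 := by decide
lemma fin_aux2 : ∀ i : Fin 3, i + 2 ≠ i := by decide
lemma fin_aux3 : ∀ i : Fin 3, (i : ℕ) = (((i + 1 : Fin 3) : ℕ) + 3 - 1) % 3 := by decide
lemma fin_aux4 : ∀ i : Fin 3, i ≠ i + 1 := by decide

lemma rigid_below (g : SCirc 3 → SCirc 3)
    (hm : ∀ a b, SCirc.le a b → SCirc.le (g a) (g b))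
    (h : ∀ w, SCirc.le (g w) w) : ∀ w, g w = w := by
  have hx : ∀ i, g (Sum.inl i) = Sum.inl i := by
    intro i
    have hi := h (Sum.inl i)
    rcases hgx : g (Sum.inl i) with j | j
    · rw [hgx] at hi
      have : j = i := hi
      rw [this]
    · rw [hgx] at hi
      exact absurd hi (by simp [SCirc.le])
  intro w
  rcases w with i | i
  · exact hx i
  · have h1 : SCirc.le (g (Sum.inl i)) (g (Sum.inr i)) :=
      hm _ _ (Or.inl rfl)
    have hlow : SCirc.le (Sum.inl (i + 2)) (Sum.inr i) := Or.inr (fin_aux1 i)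
    have h2 : SCirc.le (g (Sum.inl (i + 2))) (g (Sum.inr i)) := hm _ _ hlow
    rw [hx i] at h1
    rw [hx (i + 2)] at h2
    have h3 := h (Sum.inr i)
    rcases hgy : g (Sum.inr i) with k | k
    · rw [hgy] at h1 h2
      have e1 : i = k := h1
      have e2 : i + 2 = k := h2
      exact absurd (e1 ▸ e2) (fin_aux2 i)
    · rw [hgy] at h3
      have : k = i := h3
      exact congrArg Sum.inr this

lemma rigid_above (g : SCirc 3 → SCirc 3)
    (hm : ∀ a b, SCirc.le a b → SCirc.le (g a) (g b))
    (h : ∀ w, SCirc.le w (g w)) : ∀ w, g w = w := by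
  have hy : ∀ i, g (Sum.inr i) = Sum.inr i := by
    intro i
    have hi := h (Sum.inr i)
    rcases hgy : g (Sum.inr i) with k | k
    · rw [hgy] at hi
      exact absurd hi (by simp [SCirc.le])
    · rw [hgy] at hi
      have : i = k := hi
      rw [this]
  intro w
  rcases w with i | i
  · have hi := h (Sum.inl i)
    rcases hgx : g (Sum.inl i) with j | j
    · rw [hgx] at hi
      have : i = j := hi
      rw [this]
    · exfalso
      have h1 : SCirc.le (g (Sum.inl i)) (g (Sum.inr i)) := hm _ _ (Or.inl rfl)
      have hlow : SCirc.le (Sum.inl i) (Sum.inr (i + 1)) := Or.inr (fin_aux3 i)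
      have h2 : SCirc.le (g (Sum.inl i)) (g (Sum.inr (i + 1))) := hm _ _ hlow
      rw [hgx, hy i] at h1
      rw [hgx, hy (i + 1)] at h2
      have e1 : j = i := h1
      have e2 : j = i + 1 := h2
      exact absurd (e1 ▸ e2) (fin_aux4 i)
  · exact hy i

/-- The key lemma: a motion planner over `Q` together with a monotone map
`ψ : X → Q` whose first (or second) projection is the identity forces the other
projection to be the identity as well. -/
lemma keyRigidity {Q : Set (SCirc 3 × SCirc 3)} (hQ : AdmitsMotionPlanner Q)
    (ψ : SCirc 3 → SCirc 3 × SCirc 3) (hr : ∀ w, ψ w ∈ Q)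
    (hm : ∀ w w', SCirc.le w w' →
      SCirc.le (ψ w).1 (ψ w').1 ∧ SCirc.le (ψ w).2 (ψ w').2)
    (h0 : (∀ w, (ψ w).1 = w) ∨ (∀ w, (ψ w).2 = w)) :
    ∀ w, ψ w = (w, w) := by
  obtain ⟨s, hs⟩ := hQ
  set F : SCirc 3 → unitInterval → SCirc 3 := fun w t => s ⟨ψ w, hr w⟩ t with hF
  -- monotonicity in `w` for each fixed `t`
  have hmonoF : ∀ (t : unitInterval) (w w' : SCirc 3), SCirc.le w w' →
      SCirc.le (F w t) (F w' t) := by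
    intro t w w' hww
    have hspecval : ψ w ⤳ ψ w' := by
      rw [← Prod.mk.eta (p := ψ w), ← Prod.mk.eta (p := ψ w')]
      exact (specializes_iff_le.mpr (hm w w' hww).1).prod
        (specializes_iff_le.mpr (hm w w' hww).2)
    have hspec : (⟨ψ w, hr w⟩ : Q) ⤳ (⟨ψ w', hr w'⟩ : Q) :=
      (Topology.IsInducing.subtypeVal.specializes_iff).mp hspecval
    have hcont : Continuous fun q : Q => (s q) t :=
      (continuous_eval_const t).comp s.continuous
    exact specializes_iff_le.mp (hspec.map hcont)
  -- eventual comparison in `t`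
  have hev : ∀ t0 : unitInterval, ∀ᶠ t in nhds t0, ∀ w,
      SCirc.le (F w t) (F w t0) := by
    intro t0
    rw [Filter.eventually_all]
    intro w
    have hγ : Continuous fun t => F w t := (s ⟨ψ w, hr w⟩).continuous
    have hU : IsOpen {z : SCirc 3 | SCirc.le z (F w t0)} := isOpen_down _
    have := (hU.preimage hγ).mem_nhds (by exact le_refl' (F w t0))
    exact this
  set R : Set unitInterval := {t | ∀ w, F w t = w} with hR
  have hRopen : IsOpen R := by
    rw [isOpen_iff_mem_nhds]
    intro t0 ht0
    filter_upwards [hev t0] with t ht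
    intro w
    refine rigid_below (fun w => F w t) (fun a b hab => hmonoF t a b hab) ?_ w
    intro w'
    have := ht w'
    rwa [ht0 w'] at this
  have hRclosed : IsClosed R := by
    rw [← isOpen_compl_iff, isOpen_iff_mem_nhds]
    intro t0 ht0
    filter_upwards [hev t0] with t ht
    intro htR
    apply ht0
    intro w
    refine rigid_above (fun w => F w t0) (fun a b hab => hmonoF t0 a b hab) ?_ w
    intro w'
    have := ht w'
    rwa [htR w'] at this
  have hRne : R.Nonempty := by
    rcases h0 with h1 | h2
    · refine ⟨0, fun w => ?_⟩
      have := congrArg Prod.fst (hs ⟨ψ w, hr w⟩)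
      simp only at this
      rw [hF]
      simp only
      rw [this, h1 w]
    · refine ⟨1, fun w => ?_⟩
      have := congrArg Prod.snd (hs ⟨ψ w, hr w⟩)
      simp only at this
      rw [hF]
      simp only
      rw [this, h2 w]
  have hRuniv : R = univ := by
    rcases isClopen_iff.mp ⟨hRclosed, hRopen⟩ with h | h
    · exact absurd (h ▸ hRne) (by simp)
    · exact h
  have h0R : (0 : unitInterval) ∈ R := hRuniv ▸ mem_univ _
  have h1R : (1 : unitInterval) ∈ R := hRuniv ▸ mem_univ _
  intro w
  have e0 : (ψ w).1 = w := by
    have := congrArg Prod.fst (hs ⟨ψ w, hr w⟩)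
    simp only at this
    rw [← this]
    exact h0R w
  have e1 : (ψ w).2 = w := by
    have := congrArg Prod.snd (hs ⟨ψ w, hr w⟩)
    simp only at this
    rw [← this]
    exact h1R w
  rw [← Prod.mk.eta (p := ψ w), e0, e1]

/-! ### The certificates for the lower bound -/

/-- Rotation of the circle model. -/
def rotC (k : Fin 3) : SCirc 3 → SCirc 3
  | Sum.inl i => Sum.inl (i + k)
  | Sum.inr i => Sum.inr (i + k)

/-- Reflection of the circle model. -/
def reflC (c : Fin 3) : SCirc 3 → SCirc 3
  | Sum.inl i => Sum.inl (c - i - 1)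
  | Sum.inr i => Sum.inr (c - i)

def certPsi (c : Fin 11) : SCirc 3 → SCirc 3 × SCirc 3 :=
  match c.1 with
  | 0 => fun w => (Sum.inl 0, w)
  | 1 => fun w => (Sum.inl 1, w)
  | 2 => fun w => (Sum.inl 2, w)
  | 3 => fun w => (w, Sum.inl 0)
  | 4 => fun w => (w, Sum.inl 1)
  | 5 => fun w => (w, Sum.inl 2)
  | 6 => fun w => (w, rotC 1 w)
  | 7 => fun w => (w, rotC 2 w)
  | 8 => fun w => (w, reflC 0 w)
  | 9 => fun w => (w, reflC 1 w)
  | _ => fun w => (w, reflC 2 w)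

def certCells (c : Fin 11) : Fin 3 → Fin 3 → Bool :=
  match c.1 with
  | 0 => fun a _ => a == 0
  | 1 => fun a _ => a == 1
  | 2 => fun a _ => a == 2
  | 3 => fun _ b => b == 0
  | 4 => fun _ b => b == 1
  | 5 => fun _ b => b == 2
  | 6 => fun a b => b == a + 1
  | 7 => fun a b => b == a + 2
  | 8 => fun a b => b == 0 - a
  | 9 => fun a b => b == 1 - a
  | _ => fun a b => b == 2 - a

set_option maxRecDepth 4000 in
lemma certs_mono : ∀ (c : Fin 11) (w w' : SCirc 3), SCirc.le w w' →
    SCirc.le (certPsi c w).1 (certPsi c w').1 ∧ SCirc.le (certPsi c w).2 (certPsi c w').2 := by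
  decide

set_option maxRecDepth 4000 in
lemma certs_dom : ∀ (c : Fin 11) (w : SCirc 3), ∃ i j, certCells c i j = true ∧
    SCirc.le (certPsi c w).1 (Sum.inr i) ∧ SCirc.le (certPsi c w).2 (Sum.inr j) := by
  decide

set_option maxRecDepth 4000 in
lemma certs_proj : ∀ c : Fin 11,
    ((∀ w, (certPsi c w).1 = w) ∧ ¬(∀ w, (certPsi c w).2 = w)) ∨
    ((∀ w, (certPsi c w).2 = w) ∧ ¬(∀ w, (certPsi c w).1 = w)) := by decide

set_option maxRecDepth 4000 in
lemma comb : ∀ b : Fin 3 → Fin 3 → Bool, ∃ c : Fin 11,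
    (∀ i j, certCells c i j = true → b i j = true) ∨
    (∀ i j, certCells c i j = true → b i j = false) := by decide

/-! ### Lower bound -/

lemma not_tccover_two : ¬ TCCover (SCirc 3) 2 := by
  rintro ⟨Q, hop, hcov, hpl⟩
  classical
  set b : Fin 3 → Fin 3 → Bool :=
    fun i j => decide ((Sum.inr i, (Sum.inr j : SCirc 3)) ∈ Q 0) with hb
  obtain ⟨c, hcase⟩ := comb b
  have main : ∀ k : Fin 2, (∀ w, certPsi c w ∈ Q k) → False := by
    intro k hrange
    have key := keyRigidity (hpl k) (certPsi c) hrange (certs_mono c)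
      (by rcases certs_proj c with ⟨h1, _⟩ | ⟨h1, _⟩
          · exact Or.inl h1
          · exact Or.inr h1)
    rcases certs_proj c with ⟨_, h2⟩ | ⟨_, h2⟩
    · exact h2 fun w => by rw [key w]
    · exact h2 fun w => by rw [key w]
  rcases hcase with hA | hB
  · refine main 0 fun w => ?_
    obtain ⟨i, j, hc, h1, h2⟩ := certs_dom c w
    have hy : ((Sum.inr i : SCirc 3), (Sum.inr j : SCirc 3)) ∈ Q 0 :=
      of_decide_eq_true (hA i j hc)
    exact prod_open_down (hop 0) hy h1 h2
  · refine main 1 fun w => ?_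
    obtain ⟨i, j, hc, h1, h2⟩ := certs_dom c w
    have hy : ((Sum.inr i : SCirc 3), (Sum.inr j : SCirc 3)) ∈ Q 1 := by
      have hmem : ((Sum.inr i : SCirc 3), (Sum.inr j : SCirc 3)) ∈
          ⋃ k, Q k := hcov ▸ mem_univ _
      obtain ⟨k, hk⟩ := mem_iUnion.mp hmem
      have hnot : ((Sum.inr i : SCirc 3), (Sum.inr j : SCirc 3)) ∉ Q 0 := by
        intro hin
        have : b i j = true := by rw [hb]; exact decide_eq_true hin
        rw [hB i j hc] at this
        exact Bool.false_ne_true this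
      fin_cases k
      · exact absurd hk hnot
      · exact hk
    exact prod_open_down (hop 1) hy h1 h2

/-! ### Upper bound -/

def Zs (k : Fin 3) : Set (SCirc 3) := {z | z ≠ Sum.inr k}

lemma Zs_down : ∀ (k : Fin 3) (a b : SCirc 3),
    a ≠ Sum.inr k → SCirc.le b a → b ≠ Sum.inr k := by decide

lemma Zs_open (k : Fin 3) : IsOpen (Zs k) := by
  rw [isOpen_def]
  exact fun a ha b hba => Zs_down k a b ha hba

def Qset (k : Fin 3) : Set (SCirc 3 × SCirc 3) := (Zs k) ×ˢ (Zs k)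

def h1 (k : Fin 3) (z : SCirc 3) : SCirc 3 :=
  if z = Sum.inl (k + 2) then Sum.inr (k + 2) else z

def h2 (k : Fin 3) (z : SCirc 3) : SCirc 3 :=
  if z = Sum.inl (k + 2) ∨ z = Sum.inr (k + 2) then Sum.inl (k + 1) else z

def h3 (k : Fin 3) (z : SCirc 3) : SCirc 3 :=
  if z = Sum.inl k then Sum.inl k else Sum.inr (k + 1)

lemma h1_mono : ∀ (k : Fin 3) (a b : SCirc 3), a ≠ Sum.inr k → b ≠ Sum.inr k →
    SCirc.le a b → SCirc.le (h1 k a) (h1 k b) := by decide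
lemma h2_mono : ∀ (k : Fin 3) (a b : SCirc 3), a ≠ Sum.inr k → b ≠ Sum.inr k →
    SCirc.le a b → SCirc.le (h2 k a) (h2 k b) := by decide
lemma h3_mono : ∀ (k : Fin 3) (a b : SCirc 3), a ≠ Sum.inr k → b ≠ Sum.inr k →
    SCirc.le a b → SCirc.le (h3 k a) (h3 k b) := by decide

lemma step1 : ∀ (k : Fin 3) (u : SCirc 3), u ≠ Sum.inr k →
    SCirc.le u (h1 k u) := by decide
lemma step2 : ∀ (k : Fin 3) (u : SCirc 3), u ≠ Sum.inr k →
    SCirc.le (h2 k u) (h1 k u) := by decide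
lemma step3 : ∀ (k : Fin 3) (u : SCirc 3), u ≠ Sum.inr k →
    SCirc.le (h2 k u) (h3 k u) := by decide
lemma step4 : ∀ (k : Fin 3) (u : SCirc 3), u ≠ Sum.inr k →
    SCirc.le (Sum.inl k) (h3 k u) := by decide

lemma planner_Qset (k : Fin 3) : AdmitsMotionPlanner (Qset k) := by
  set e1 : Qset k → SCirc 3 := fun q => (q : SCirc 3 × SCirc 3).1 with he1
  set e2 : Qset k → SCirc 3 := fun q => (q : SCirc 3 × SCirc 3).2 with he2
  have hc1 : Continuous e1 := continuous_fst.comp continuous_subtype_val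
  have hc2 : Continuous e2 := continuous_snd.comp continuous_subtype_val
  have hr1 : ∀ q : Qset k, e1 q ∈ Zs k := fun q => q.2.1
  have hr2 : ∀ q : Qset k, e2 q ∈ Zs k := fun q => q.2.2
  have cf1 : Continuous fun q => h1 k (e1 q) :=
    continuous_comp_of_monoOn e1 hc1 (Zs k) (Zs_open k) (h1 k) hr1 (fun a b ha hb => h1_mono k a b ha hb)
  have cf2 : Continuous fun q => h2 k (e1 q) :=
    continuous_comp_of_monoOn e1 hc1 (Zs k) (Zs_open k) (h2 k) hr1 (fun a b ha hb => h2_mono k a b ha hb)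
  have cf3 : Continuous fun q => h3 k (e1 q) :=
    continuous_comp_of_monoOn e1 hc1 (Zs k) (Zs_open k) (h3 k) hr1 (fun a b ha hb => h3_mono k a b ha hb)
  have cf5 : Continuous fun q => h3 k (e2 q) :=
    continuous_comp_of_monoOn e2 hc2 (Zs k) (Zs_open k) (h3 k) hr2 (fun a b ha hb => h3_mono k a b ha hb)
  have cf6 : Continuous fun q => h2 k (e2 q) :=
    continuous_comp_of_monoOn e2 hc2 (Zs k) (Zs_open k) (h2 k) hr2 (fun a b ha hb => h2_mono k a b ha hb)
  have cf7 : Continuous fun q => h1 k (e2 q) :=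
    continuous_comp_of_monoOn e2 hc2 (Zs k) (Zs_open k) (h1 k) hr2 (fun a b ha hb => h1_mono k a b ha hb)
  obtain ⟨γ01, g01⟩ := upFam hc1 cf1 (fun q => step1 k (e1 q) (hr1 q))
  obtain ⟨γ12, g12⟩ := downFam cf1 cf2 (fun q => step2 k (e1 q) (hr1 q))
  obtain ⟨γ23, g23⟩ := upFam cf2 cf3 (fun q => step3 k (e1 q) (hr1 q))
  obtain ⟨γ34, g34⟩ := downFam cf3 (@continuous_const (↥(Qset k)) (SCirc 3) _ _ (Sum.inl k))
    (fun q => step4 k (e1 q) (hr1 q))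
  obtain ⟨γ45, g45⟩ := upFam (@continuous_const (↥(Qset k)) (SCirc 3) _ _ (Sum.inl k)) cf5
    (fun q => step4 k (e2 q) (hr2 q))
  obtain ⟨γ56, g56⟩ := downFam cf5 cf6 (fun q => step3 k (e2 q) (hr2 q))
  obtain ⟨γ67, g67⟩ := upFam cf6 cf7 (fun q => step2 k (e2 q) (hr2 q))
  obtain ⟨γ78, g78⟩ := downFam cf7 hc2 (fun q => step1 k (e2 q) (hr2 q))
  set Γ : ∀ q : Qset k, Path (e1 q) (e2 q) := fun q =>
    (γ01 q).trans ((γ12 q).trans ((γ23 q).trans ((γ34 q).trans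
      ((γ45 q).trans ((γ56 q).trans ((γ67 q).trans (γ78 q))))))) with hΓ
  have hcont : Continuous ↿Γ := by
    apply Path.trans_continuous_family _ g01
    apply Path.trans_continuous_family _ g12
    apply Path.trans_continuous_family _ g23
    apply Path.trans_continuous_family _ g34
    apply Path.trans_continuous_family _ g45
    apply Path.trans_continuous_family _ g56
    exact Path.trans_continuous_family _ g67 _ g78
  refine ⟨ContinuousMap.curry ⟨fun p : Qset k × unitInterval => Γ p.1 p.2, hcont⟩,
    fun q => ?_⟩
  have hsq : ∀ t : unitInterval,
      (ContinuousMap.curry ⟨fun p : Qset k × unitInterval => Γ p.1 p.2, hcont⟩) q t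
      = Γ q t := fun t => rfl
  rw [hsq 0, hsq 1]
  have h0 : (Γ q) 0 = e1 q := (Γ q).source
  have h1' : (Γ q) 1 = e2 q := (Γ q).target
  rw [h0, h1']

lemma tccover_three : TCCover (SCirc 3) 3 := by
  refine ⟨Qset, fun k => (Zs_open k).prod (Zs_open k), ?_, planner_Qset⟩
  rw [eq_univ_iff_forall]
  intro p
  have : ∀ u v : SCirc 3, ∃ k : Fin 3, u ≠ Sum.inr k ∧ v ≠ Sum.inr k := by decide
  obtain ⟨k, hk1, hk2⟩ := this p.1 p.2
  exact mem_iUnion.mpr ⟨k, hk1, hk2⟩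

/-! ### Monotonicity of `TCCover` and the computation of `sInf` -/

lemma planner_empty : AdmitsMotionPlanner (∅ : Set (SCirc 3 × SCirc 3)) := by
  refine ⟨ContinuousMap.const _ (ContinuousMap.const _ (Sum.inl 0)), fun q => ?_⟩
  exact absurd q.2 (notMem_empty _)

lemma tccover_succ {m : ℕ} (h : TCCover (SCirc 3) m) : TCCover (SCirc 3) (m + 1) := by
  obtain ⟨Q, hop, hcov, hpl⟩ := h
  refine ⟨Fin.snoc Q ∅, ?_, ?_, ?_⟩
  · intro i
    refine Fin.lastCases ?_ (fun j => ?_) i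
    · simp [Fin.snoc_last]
    · simp only [Fin.snoc_castSucc]
      exact hop j
  · rw [eq_univ_iff_forall]
    intro p
    have hp : p ∈ ⋃ i, Q i := hcov ▸ mem_univ _
    obtain ⟨j, hj⟩ := mem_iUnion.mp hp
    exact mem_iUnion.mpr ⟨j.castSucc, by simpa [Fin.snoc_castSucc] using hj⟩
  · intro i
    refine Fin.lastCases ?_ (fun j => ?_) i
    · simp only [Fin.snoc_last]
      exact planner_empty
    · simp only [Fin.snoc_castSucc]
      exact hpl j

lemma tccover_mono {a b : ℕ} (hab : a ≤ b) (h : TCCover (SCirc 3) a) :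
    TCCover (SCirc 3) b := by
  induction b with
  | zero => exact (Nat.le_zero.mp hab) ▸ h
  | succ n ih =>
    rcases Nat.lt_or_ge a (n + 1) with hlt | hge
    · exact tccover_succ (ih (Nat.lt_succ_iff.mp hlt))
    · exact (Nat.le_antisymm hab hge) ▸ h

end SCirc

/-- The topological complexity of the finite model `𝕊¹_3` of the
circle with 6 points equals 3: `TC(𝕊¹_3) = 3`.  In particular, `𝕊¹_3 × 𝕊¹_3` can be
covered by three open sets each admitting a motion planner, but not by two. -/
theorem tc_scirc_three_eq_three :
    topologicalComplexity (SCirc 3) = 3 ∧ TCCover (SCirc 3) 3 ∧ ¬ TCCover (SCirc 3) 2 := by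
  refine ⟨?_, SCirc.tccover_three, SCirc.not_tccover_two⟩
  have hmem : (3 : ℕ) ∈ {k | TCCover (SCirc 3) k} := SCirc.tccover_three
  apply le_antisymm
  · exact Nat.sInf_le hmem
  · refine le_csInf ⟨3, hmem⟩ ?_
    intro m hm
    by_contra hlt
    push_neg at hlt
    exact SCirc.not_tccover_two (SCirc.tccover_mono (Nat.lt_succ_iff.mp hlt) hm)
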